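/- arXiv:2503.02225 — 5 statements merged into one kernel-verified Lean document; each statement's English description precedes it below -/
import Mathlib

section
/- (Deterministic Unified SAM.) Let f : ℝ^d → ℝ be differentiable with L-Lipschitz gradient, μ-PL with minimizer x*, and let λ ∈ [0,1]. Define the iterates x^{t+1} = x^t − γ ∇f(x^t + ρ(1 − λ + λ/‖∇f(x^t)‖)∇f(x^t)) (with the convention λ/0 = 0), where ρ ≥ 0 and γ > 0 satisfy L·ρ·(1 + 2(1−λ)²) ≤ 1, 2L(2L²ρ²(1−λ)² + 1)·γ ≤ 1 − L·ρ·(1 + 2(1−λ)²), and γμ ≤ 1. Then for every t ≥ 0, f(x^t) − f(x*) ≤ (1 − γμ)^t (f(x^0) − f(x*)) + L·ρ(1 + 2γL²ρ)·λ²/μ. In particular, for λ = 0 the iterates converge linearly to the exact minimum value, while for λ > 0 the guarantee is only up to a neighborhood of size Lρ(1 + 2γL²ρ)λ²/μ. -/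
set_option maxHeartbeats 1000000

noncomputable section

lemma smooth_descent {F : Type*} [NormedAddCommGroup F] [InnerProductSpace ℝ F] [CompleteSpace F]
    (f : F → ℝ) (hdiff : Differentiable ℝ f) (L : ℝ) (hL : 0 ≤ L)
    (hsmooth : LipschitzWith L.toNNReal (gradient f)) (x y : F) :
    f y ≤ f x + inner ℝ (gradient f x) (y - x) + L / 2 * ‖y - x‖ ^ 2 := by
  have hlip : ∀ a b : F, ‖gradient f a - gradient f b‖ ≤ L * ‖a - b‖ := by
    intro a b
    simpa [dist_eq_norm, Real.coe_toNNReal L hL] using hsmooth.dist_le_mul a b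
  set v := y - x with hv
  have hline : ∀ t : ℝ, HasDerivAt (fun s : ℝ => x + s • v) v t := by
    intro t
    simpa using ((hasDerivAt_id t).smul_const v).const_add x
  have hφ : ∀ t : ℝ, HasDerivAt (fun s : ℝ => f (x + s • v))
      (inner ℝ (gradient f (x + t • v)) v : ℝ) t := by
    intro t
    have h1 := ((hdiff (x + t • v)).hasFDerivAt).comp_hasDerivAt t (hline t)
    have h2 : fderiv ℝ f (x + t • v) v = (inner ℝ (gradient f (x + t • v)) v : ℝ) := by
      rw [((hdiff (x + t • v)).hasGradientAt.hasFDerivAt).fderiv]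
      simp [InnerProductSpace.toDual_apply_apply]
    rw [← h2]; exact h1
  have hcontg : Continuous fun t : ℝ => gradient f (x + t • v) :=
    hsmooth.continuous.comp (by continuity)
  have hcont : Continuous fun t : ℝ => (inner ℝ (gradient f (x + t • v)) v : ℝ) :=
    hcontg.inner continuous_const
  have hint : f (x + (1:ℝ) • v) - f (x + (0:ℝ) • v)
      = ∫ t in (0:ℝ)..1, (inner ℝ (gradient f (x + t • v)) v : ℝ) :=
    (intervalIntegral.integral_eq_sub_of_hasDerivAt (fun t _ => hφ t)
      (hcont.intervalIntegrable 0 1)).symm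
  have hy : x + (1:ℝ) • v = y := by simp [hv]
  have hx0 : x + (0:ℝ) • v = x := by simp
  rw [hy, hx0] at hint
  have hmono : (∫ t in (0:ℝ)..1, (inner ℝ (gradient f (x + t • v)) v : ℝ))
      ≤ ∫ t in (0:ℝ)..1, ((inner ℝ (gradient f x) v : ℝ) + L * t * ‖v‖ ^ 2) := by
    apply intervalIntegral.integral_mono_on (by norm_num)
      (hcont.intervalIntegrable 0 1)
      ((continuous_const.add ((continuous_const.mul continuous_id').mul
        continuous_const) : Continuous fun t : ℝ =>
          (inner ℝ (gradient f x) v : ℝ) + L * t * ‖v‖ ^ 2).intervalIntegrable 0 1)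
    intro t ht
    have h1 : (inner ℝ (gradient f (x + t • v)) v : ℝ) - inner ℝ (gradient f x) v
        = inner ℝ (gradient f (x + t • v) - gradient f x) v := by
      rw [inner_sub_left]
    have h2 : (inner ℝ (gradient f (x + t • v) - gradient f x) v : ℝ)
        ≤ ‖gradient f (x + t • v) - gradient f x‖ * ‖v‖ := real_inner_le_norm _ _
    have h3 : ‖gradient f (x + t • v) - gradient f x‖ ≤ L * (t * ‖v‖) := by
      have := hlip (x + t • v) x
      simpa [abs_of_nonneg ht.1, norm_smul, mul_assoc] using this
    have h4 : ‖gradient f (x + t • v) - gradient f x‖ * ‖v‖ ≤ L * (t * ‖v‖) * ‖v‖ :=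
      mul_le_mul_of_nonneg_right h3 (norm_nonneg v)
    show (inner ℝ (gradient f (x + t • v)) v : ℝ) ≤ inner ℝ (gradient f x) v + L * t * ‖v‖ ^ 2
    nlinarith [norm_nonneg v]
  have hval : (∫ t in (0:ℝ)..1, ((inner ℝ (gradient f x) v : ℝ) + L * t * ‖v‖ ^ 2))
      = inner ℝ (gradient f x) v + L / 2 * ‖v‖ ^ 2 := by
    rw [intervalIntegral.integral_add (f := fun _ => (inner ℝ (gradient f x) v : ℝ))
      (g := fun t => L * t * ‖v‖ ^ 2) intervalIntegrable_const
      (((continuous_const.mul continuous_id').mul continuous_const :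
        Continuous fun t : ℝ => L * t * ‖v‖ ^ 2).intervalIntegrable 0 1)]
    simp only [intervalIntegral.integral_const]
    have : (∫ t in (0:ℝ)..1, L * t * ‖v‖ ^ 2) = L / 2 * ‖v‖ ^ 2 := by
      have : (fun t : ℝ => L * t * ‖v‖ ^ 2) = fun t : ℝ => t * (L * ‖v‖ ^ 2) := by
        funext t; ring
      rw [this, intervalIntegral.integral_mul_const, integral_id]
      ring
    rw [this]; simp
  rw [hval] at hmono
  linarith [hint ▸ hmono]

lemma sam_step_alg {F : Type*} [NormedAddCommGroup F] [InnerProductSpace ℝ F]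
    (fX fX' fstar L μ lam ρ γ : ℝ) (g h : F)
    (hL : 0 ≤ L) (hμ : 0 < μ) (hlam0 : 0 ≤ lam) (hlam1 : lam ≤ 1)
    (hρ : 0 ≤ ρ) (hγ : 0 < γ)
    (hγbound : 2 * L * (2 * L ^ 2 * ρ ^ 2 * (1 - lam) ^ 2 + 1) * γ ≤
      1 - L * ρ * (1 + 2 * (1 - lam) ^ 2))
    (hdesc : fX' ≤ fX + inner ℝ g (-(γ • h)) + L / 2 * ‖(-(γ • h) : F)‖ ^ 2)
    (hE : ‖h - g‖ ≤ L * (ρ * ((1 - lam) * ‖g‖ + lam)))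
    (hPL : 2 * μ * (fX - fstar) ≤ ‖g‖ ^ 2) :
    fX' - fstar ≤ (1 - γ * μ) * (fX - fstar) +
      (γ * L * ρ * lam ^ 2 + 2 * γ ^ 2 * L ^ 3 * ρ ^ 2 * lam ^ 2) := by
  have hG0 := norm_nonneg g
  have hE0 := norm_nonneg (h - g)
  have hH0 := norm_nonneg h
  have hH : ‖h‖ ≤ ‖g‖ + ‖h - g‖ := by simpa using norm_add_le g (h - g)
  have hgh : (inner ℝ g (h - g) : ℝ) = inner ℝ g h - ‖g‖ ^ 2 := by
    rw [inner_sub_right, real_inner_self_eq_norm_sq]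
  have hip : -(‖g‖ * ‖h - g‖) ≤ (inner ℝ g (h - g) : ℝ) := by
    have h1 := abs_real_inner_le_norm g (h - g)
    have h2 := neg_abs_le (inner ℝ g (h - g) : ℝ)
    linarith
  have hlow : ‖g‖ ^ 2 - ‖g‖ * ‖h - g‖ ≤ (inner ℝ g h : ℝ) := by linarith
  have h7 : (inner ℝ g (-(γ • h)) : ℝ) = -(γ * inner ℝ g h) := by
    rw [inner_neg_right, real_inner_smul_right]
  have hnorm : ‖(-(γ • h) : F)‖ ^ 2 = γ ^ 2 * ‖h‖ ^ 2 := by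
    rw [norm_neg, norm_smul, Real.norm_eq_abs, mul_pow, sq_abs]
  rw [h7, hnorm] at hdesc
  have h8 := mul_le_mul_of_nonneg_left hlow hγ.le
  have hA : fX' ≤ fX - γ * ‖g‖ ^ 2 + γ * (‖g‖ * ‖h - g‖) + L / 2 * (γ ^ 2 * ‖h‖ ^ 2) := by
    linarith
  -- square bounds
  have hE2 : ‖h - g‖ ^ 2 ≤ (L * (ρ * ((1 - lam) * ‖g‖ + lam))) ^ 2 := pow_le_pow_left₀ hE0 hE 2
  have hH2 : ‖h‖ ^ 2 ≤ 2 * ‖g‖ ^ 2 + 2 * ‖h - g‖ ^ 2 := by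
    have := pow_le_pow_left₀ hH0 hH 2
    have h11 := sq_nonneg (‖g‖ - ‖h - g‖)
    nlinarith [this, h11]
  have hB2 : (L * (ρ * ((1 - lam) * ‖g‖ + lam))) ^ 2 ≤
      2 * L ^ 2 * ρ ^ 2 * (1 - lam) ^ 2 * ‖g‖ ^ 2 + 2 * L ^ 2 * ρ ^ 2 * lam ^ 2 := by
    have hint := mul_nonneg (sq_nonneg (L * ρ)) (sq_nonneg ((1 - lam) * ‖g‖ - lam))
    linarith [hint]
  have hGE : ‖g‖ * ‖h - g‖ ≤ L * ρ * (1 - lam) * ‖g‖ ^ 2 + L * ρ * (lam ^ 2 + ‖g‖ ^ 2 / 4) := by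
    have h9 : ‖g‖ * ‖h - g‖ ≤ ‖g‖ * (L * (ρ * ((1 - lam) * ‖g‖ + lam))) :=
      mul_le_mul_of_nonneg_left hE hG0
    have h10 : L * ρ * (lam * ‖g‖) ≤ L * ρ * (lam ^ 2 + ‖g‖ ^ 2 / 4) :=
      mul_le_mul_of_nonneg_left (by nlinarith [sq_nonneg (lam - ‖g‖ / 2)] : lam * ‖g‖ ≤ lam ^ 2 + ‖g‖ ^ 2 / 4)
        (mul_nonneg hL hρ)
    linarith [h9, h10]
  have hcoef : L * ρ * (1 - lam) + L * ρ / 4 + L * γ * (1 + 2 * L ^ 2 * ρ ^ 2 * (1 - lam) ^ 2)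
      ≤ 1 / 2 := by
    have hsq := mul_nonneg (mul_nonneg hL hρ) (sq_nonneg ((1 - lam) - 1 / 2))
    linarith [hsq, hγbound]
  have hLg : (0:ℝ) ≤ L / 2 * γ ^ 2 := by positivity
  have hcomb : ‖h‖ ^ 2 ≤ 2 * ‖g‖ ^ 2 + 4 * L ^ 2 * ρ ^ 2 * (1 - lam) ^ 2 * ‖g‖ ^ 2
      + 4 * L ^ 2 * ρ ^ 2 * lam ^ 2 := by linarith
  have e1 : γ * (‖g‖ * ‖h - g‖) ≤
      γ * (L * ρ * (1 - lam) * ‖g‖ ^ 2 + L * ρ * (lam ^ 2 + ‖g‖ ^ 2 / 4)) :=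
    mul_le_mul_of_nonneg_left hGE hγ.le
  have e2 := mul_le_mul_of_nonneg_left hcomb hLg
  have e3 : (L * ρ * (1 - lam) + L * ρ / 4 + L * γ * (1 + 2 * L ^ 2 * ρ ^ 2 * (1 - lam) ^ 2))
      * (γ * ‖g‖ ^ 2) ≤ (1 / 2) * (γ * ‖g‖ ^ 2) :=
    mul_le_mul_of_nonneg_right hcoef (by positivity)
  have hstep1 : fX' ≤ fX - γ / 2 * ‖g‖ ^ 2 + γ * L * ρ * lam ^ 2
      + 2 * γ ^ 2 * L ^ 3 * ρ ^ 2 * lam ^ 2 := by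
    linarith [hA, e1, e2, e3]
  have hmul := mul_le_mul_of_nonneg_left hPL (by linarith : (0:ℝ) ≤ γ / 2)
  linarith

/-- **Corollary (deterministic Unified SAM for PL functions).**
Note that in Lean `lam / ‖(0 : E)‖ = lam / 0 = 0`, which matches the convention `λ/0 = 0`. -/
theorem deterministic_unifiedSAM_PL
    {d : ℕ} (f : EuclideanSpace ℝ (Fin d) → ℝ)
    (hdiff : Differentiable ℝ f)
    (L : ℝ) (hL : 0 ≤ L)
    (hsmooth : LipschitzWith L.toNNReal (gradient f))
    (μ : ℝ) (hμ : 0 < μ)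
    (xstar : EuclideanSpace ℝ (Fin d)) (hmin : ∀ y, f xstar ≤ f y)
    (hPL : ∀ x, 2 * μ * (f x - f xstar) ≤ ‖gradient f x‖ ^ 2)
    (lam : ℝ) (hlam0 : 0 ≤ lam) (hlam1 : lam ≤ 1)
    (ρ γ : ℝ) (hρ : 0 ≤ ρ) (hγ : 0 < γ)
    (hρbound : L * ρ * (1 + 2 * (1 - lam) ^ 2) ≤ 1)
    (hγbound : 2 * L * (2 * L ^ 2 * ρ ^ 2 * (1 - lam) ^ 2 + 1) * γ ≤
      1 - L * ρ * (1 + 2 * (1 - lam) ^ 2))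
    (hγμ : γ * μ ≤ 1)
    (x : ℕ → EuclideanSpace ℝ (Fin d))
    (hxrec : ∀ t, x (t + 1) = x t - γ •
      gradient f (x t + ρ • ((1 - lam + lam / ‖gradient f (x t)‖) • gradient f (x t)))) :
    ∀ t : ℕ, f (x t) - f xstar ≤
      (1 - γ * μ) ^ t * (f (x 0) - f xstar) + L * ρ * (1 + 2 * γ * L ^ 2 * ρ) * lam ^ 2 / μ := by
  have hlip : ∀ a b : EuclideanSpace ℝ (Fin d),
      ‖gradient f a - gradient f b‖ ≤ L * ‖a - b‖ := by
    intro a b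
    simpa [dist_eq_norm, Real.coe_toNNReal L hL] using hsmooth.dist_le_mul a b
  have hstep : ∀ t, f (x (t + 1)) - f xstar ≤ (1 - γ * μ) * (f (x t) - f xstar) +
      (γ * L * ρ * lam ^ 2 + 2 * γ ^ 2 * L ^ 3 * ρ ^ 2 * lam ^ 2) := by
    intro t
    set p := ρ • ((1 - lam + lam / ‖gradient f (x t)‖) • gradient f (x t)) with hp
    have hxr : x (t + 1) = x t - γ • gradient f (x t + p) := by
      rw [hxrec t, ← hp]
    have hpn : ‖p‖ ≤ ρ * ((1 - lam) * ‖gradient f (x t)‖ + lam) := by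
      by_cases hz : gradient f (x t) = 0
      · rw [hp, hz]
        simp only [norm_zero, smul_zero, mul_zero, zero_mul, zero_add, norm_zero]
        exact mul_nonneg hρ hlam0
      · have hGpos : 0 < ‖gradient f (x t)‖ := norm_pos_iff.mpr hz
        have hcn : 0 ≤ 1 - lam + lam / ‖gradient f (x t)‖ :=
          add_nonneg (by linarith) (div_nonneg hlam0 (norm_nonneg _))
        have h1 : ‖p‖ = ρ * ((1 - lam + lam / ‖gradient f (x t)‖) * ‖gradient f (x t)‖) := by
          rw [hp, norm_smul, norm_smul, Real.norm_eq_abs, Real.norm_eq_abs,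
            abs_of_nonneg hρ, abs_of_nonneg hcn]
        have h2 : (1 - lam + lam / ‖gradient f (x t)‖) * ‖gradient f (x t)‖
            = (1 - lam) * ‖gradient f (x t)‖ + lam := by
          field_simp
        rw [h1, h2]
    have hE : ‖gradient f (x t + p) - gradient f (x t)‖ ≤
        L * (ρ * ((1 - lam) * ‖gradient f (x t)‖ + lam)) := by
      have h1 := hlip (x t + p) (x t)
      rw [add_sub_cancel_left] at h1
      exact le_trans h1 (mul_le_mul_of_nonneg_left hpn hL)
    have hdesc := smooth_descent f hdiff L hL hsmooth (x t)
      (x t - γ • gradient f (x t + p))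
    rw [sub_sub_cancel_left] at hdesc
    have := sam_step_alg (f (x t)) (f (x t - γ • gradient f (x t + p))) (f xstar)
      L μ lam ρ γ (gradient f (x t)) (gradient f (x t + p))
      hL hμ hlam0 hlam1 hρ hγ hγbound hdesc hE (hPL (x t))
    rw [hxr]
    exact this
  have hC : γ * L * ρ * lam ^ 2 + 2 * γ ^ 2 * L ^ 3 * ρ ^ 2 * lam ^ 2
      = γ * μ * (L * ρ * (1 + 2 * γ * L ^ 2 * ρ) * lam ^ 2 / μ) := by
    field_simp
  have hN0 : 0 ≤ L * ρ * (1 + 2 * γ * L ^ 2 * ρ) * lam ^ 2 / μ := by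
    have h1 : 0 ≤ γ * L ^ 2 * ρ := mul_nonneg (mul_nonneg hγ.le (sq_nonneg L)) hρ
    have h2 : (0:ℝ) ≤ 1 + 2 * γ * L ^ 2 * ρ := by linarith
    exact div_nonneg (mul_nonneg (mul_nonneg (mul_nonneg hL hρ) h2) (sq_nonneg lam)) hμ.le
  have h1mγμ : 0 ≤ 1 - γ * μ := by linarith
  intro t
  induction t with
  | zero => simp only [pow_zero, one_mul]; linarith
  | succ t ih =>
    have hs := hstep t
    have h2 := mul_le_mul_of_nonneg_left ih h1mγμ
    rw [pow_succ]
    nlinarith [hs, h2, hC]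

end
end

section
/- (Second-moment bound for the perturbed stochastic gradient.) Fix x ∈ ℝ^d, ρ ≥ 0, and λ ∈ [0,1]. Then E_v‖g(x + ρ(1 − λ + λ/‖g(x,v)‖)·g(x,v), v)‖² ≤ 4L_max²ρ²λ² + 2(2L_max²ρ²(1−λ)² + 1)·E_v‖g(x,v)‖², where the convention λ/0 = 0 is used when g(x,v) = 0. -/
open MeasureTheory

noncomputable section

/-- The finite-sum objective `f(x) = (1/n) ∑ i, f i x`. -/
def favg {n d : ℕ} (f : Fin n → EuclideanSpace ℝ (Fin d) → ℝ)
    (x : EuclideanSpace ℝ (Fin d)) : ℝ :=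
  (n : ℝ)⁻¹ * ∑ i, f i x

/-- The stochastic gradient `g(x, v) = (1/n) ∑ i, v i • ∇ f i x`. -/
def sgrad {n d : ℕ} (f : Fin n → EuclideanSpace ℝ (Fin d) → ℝ)
    (x : EuclideanSpace ℝ (Fin d)) (v : Fin n → ℝ) : EuclideanSpace ℝ (Fin d) :=
  (n : ℝ)⁻¹ • ∑ i, v i • gradient (f i) x

/-- **Lemma (second-moment bound for the perturbed stochastic gradient).**
Note that in Lean `lam / ‖(0 : E)‖ = lam / 0 = 0`, matching the convention `λ/0 = 0`. -/
theorem perturbed_sgrad_second_moment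
    {d n : ℕ} (hn : 0 < n)
    (f : Fin n → EuclideanSpace ℝ (Fin d) → ℝ)
    (L : Fin n → ℝ) (hLnonneg : ∀ i, 0 ≤ L i)
    (hdiff : ∀ i, Differentiable ℝ (f i))
    (hsmooth : ∀ i, LipschitzWith (L i).toNNReal (gradient (f i)))
    (Lmax : ℝ) (hLmax_ub : ∀ i, L i ≤ Lmax) (hLmax_mem : ∃ i, L i = Lmax)
    (𝒟 : Measure (Fin n → ℝ)) [IsProbabilityMeasure 𝒟]
    (hunbiased : ∀ i, ∫ v, v i ∂𝒟 = 1)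
    (hglip : ∀ᵐ v ∂𝒟, LipschitzWith Lmax.toNNReal (fun x => sgrad f x v))
    (x : EuclideanSpace ℝ (Fin d)) (ρ : ℝ) (hρ : 0 ≤ ρ)
    (lam : ℝ) (hlam0 : 0 ≤ lam) (hlam1 : lam ≤ 1)
    -- the stated expectations exist
    (hint1 : Integrable (fun v => ‖sgrad f x v‖ ^ 2) 𝒟)
    (hint2 : Integrable (fun v =>
      ‖sgrad f (x + ρ • ((1 - lam + lam / ‖sgrad f x v‖) • sgrad f x v)) v‖ ^ 2) 𝒟) :
    ∫ v, ‖sgrad f (x + ρ • ((1 - lam + lam / ‖sgrad f x v‖) • sgrad f x v)) v‖ ^ 2 ∂𝒟 ≤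
      4 * Lmax ^ 2 * ρ ^ 2 * lam ^ 2 +
      2 * (2 * Lmax ^ 2 * ρ ^ 2 * (1 - lam) ^ 2 + 1) * ∫ v, ‖sgrad f x v‖ ^ 2 ∂𝒟 := by
  obtain ⟨i0, hi0⟩ := hLmax_mem
  have hLm : 0 ≤ Lmax := hi0 ▸ hLnonneg i0
  set C : ℝ := 4 * Lmax ^ 2 * ρ ^ 2 * lam ^ 2
  set K : ℝ := 2 * (2 * Lmax ^ 2 * ρ ^ 2 * (1 - lam) ^ 2 + 1)
  have hK : 0 ≤ K := by positivity
  -- pointwise bound (a.e.)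
  have hpt : ∀ᵐ v ∂𝒟,
      ‖sgrad f (x + ρ • ((1 - lam + lam / ‖sgrad f x v‖) • sgrad f x v)) v‖ ^ 2 ≤
        C + K * ‖sgrad f x v‖ ^ 2 := by
    filter_upwards [hglip] with v hv
    set g := sgrad f x v with hg
    set c : ℝ := 1 - lam + lam / ‖g‖ with hc
    set gp := sgrad f (x + ρ • (c • g)) v with hgp
    have hc0 : 0 ≤ c := add_nonneg (by linarith) (div_nonneg hlam0 (norm_nonneg _))
    have h1 : ‖gp - g‖ ≤ Lmax * (ρ * (c * ‖g‖)) := by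
      have := hv.dist_le_mul (x + ρ • (c • g)) x
      rw [dist_eq_norm, dist_eq_norm] at this
      simpa [norm_smul, abs_of_nonneg hρ, abs_of_nonneg hc0,
        Real.coe_toNNReal _ hLm, mul_assoc] using this
    have h2 : c * ‖g‖ ≤ (1 - lam) * ‖g‖ + lam := by
      rcases eq_or_ne (‖g‖) 0 with h | h
      · rw [h]; simpa using hlam0
      · rw [hc]; field_simp; exact le_rfl
    have h3 : ‖gp‖ ≤ Lmax * (ρ * ((1 - lam) * ‖g‖ + lam)) + ‖g‖ := by
      have := norm_sub_norm_le gp g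
      nlinarith [mul_le_mul_of_nonneg_left h2 (mul_nonneg hLm hρ)]
    have hgpn : 0 ≤ ‖gp‖ := norm_nonneg _
    have hgn : 0 ≤ ‖g‖ := norm_nonneg _
    have hsq : ‖gp‖ ^ 2 ≤ (Lmax * (ρ * ((1 - lam) * ‖g‖ + lam)) + ‖g‖) ^ 2 := by
      apply sq_le_sq' _ h3
      nlinarith [mul_nonneg (mul_nonneg hLm hρ)
        (add_nonneg (mul_nonneg (by linarith : (0:ℝ) ≤ 1 - lam) hgn) hlam0)]
    simp only [C, K]
    nlinarith [sq_nonneg (Lmax * (ρ * ((1 - lam) * ‖g‖ + lam)) - ‖g‖),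
      sq_nonneg (Lmax * ρ * ((1 - lam) * ‖g‖) - Lmax * ρ * lam)]
  have hintR : Integrable (fun v => C + K * ‖sgrad f x v‖ ^ 2) 𝒟 :=
    (integrable_const C).add (hint1.const_mul K)
  calc ∫ v, ‖sgrad f (x + ρ • ((1 - lam + lam / ‖sgrad f x v‖) • sgrad f x v)) v‖ ^ 2 ∂𝒟
      ≤ ∫ v, (C + K * ‖sgrad f x v‖ ^ 2) ∂𝒟 := integral_mono_ae hint2 hintR hpt
    _ = C + K * ∫ v, ‖sgrad f x v‖ ^ 2 ∂𝒟 := by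
        rw [integral_add (integrable_const C) (hint1.const_mul K), integral_const,
          integral_const_mul]
        simp
    _ = _ := rfl

end
end

section
/- (Inner-product lower bound for the perturbed stochastic gradient.) Fix x ∈ ℝ^d, ρ ≥ 0, λ ∈ [0,1], and β > 0. Then E_v⟨g(x + ρ(1 − λ + λ/‖g(x,v)‖)·g(x,v), v), ∇f(x)⟩ ≥ (1 − β/2)‖∇f(x)‖² − L_max²ρ²λ²/β − (L_max²ρ²(1−λ)²/β)·E_v‖g(x,v)‖², where the convention λ/0 = 0 is used when g(x,v) = 0. In particular, taking β = L_max·ρ (when ρ > 0) gives E_v⟨g(x + ρ(1 − λ + λ/‖g(x,v)‖)g(x,v), v), ∇f(x)⟩ ≥ (1 − L_maxρ/2)‖∇f(x)‖² − L_maxρλ² − L_maxρ(1−λ)²·E_v‖g(x,v)‖². -/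
open MeasureTheory

noncomputable section

lemma integral_inner_mean {α : Type*} [MeasurableSpace α] {μ : Measure α} {d : ℕ}
    {g : α → EuclideanSpace ℝ (Fin d)} (hg : Integrable g μ)
    {G : EuclideanSpace ℝ (Fin d)} (h : ∫ v, g v ∂μ = G) :
    ∫ v, (inner ℝ (g v) G : ℝ) ∂μ = ‖G‖ ^ 2 := by
  calc ∫ v, (inner ℝ (g v) G : ℝ) ∂μ
      = ∫ v, (inner ℝ G (g v) : ℝ) ∂μ := by simp only [real_inner_comm]
    _ = inner ℝ G (∫ v, g v ∂μ) := integral_inner (𝕜 := ℝ) hg G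
    _ = ‖G‖ ^ 2 := by rw [h, real_inner_self_eq_norm_sq]

lemma young_aux {a b β : ℝ} (hβ : 0 < β) : a * b ≤ β / 4 * a ^ 2 + b ^ 2 / β := by
  have h : β / 4 * a ^ 2 + b ^ 2 / β - a * b = (β * a - 2 * b) ^ 2 / (4 * β) := by
    field_simp; ring
  have h2 : (0:ℝ) ≤ (β * a - 2 * b) ^ 2 / (4 * β) := by positivity
  linarith

theorem aux_bound
    {d n : ℕ}
    (f : Fin n → EuclideanSpace ℝ (Fin d) → ℝ)
    (Lmax : ℝ) (hL : 0 ≤ Lmax)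
    (𝒟 : Measure (Fin n → ℝ)) [IsProbabilityMeasure 𝒟]
    (hglip : ∀ᵐ v ∂𝒟, LipschitzWith Lmax.toNNReal (fun x => sgrad f x v))
    (x : EuclideanSpace ℝ (Fin d)) (ρ : ℝ) (hρ : 0 ≤ ρ)
    (lam : ℝ) (hlam0 : 0 ≤ lam) (hlam1 : lam ≤ 1)
    (β : ℝ) (hβ : 0 < β)
    (G : EuclideanSpace ℝ (Fin d))
    (hint1 : Integrable (fun v => ‖sgrad f x v‖ ^ 2) 𝒟)
    (hint2 : Integrable (fun v =>
      (inner ℝ (sgrad f (x + ρ • ((1 - lam + lam / ‖sgrad f x v‖) • sgrad f x v)) v) G : ℝ)) 𝒟)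
    (hgint : Integrable (fun v => sgrad f x v) 𝒟)
    (hgmean : ∫ v, sgrad f x v ∂𝒟 = G) :
    ∫ v, (inner ℝ (sgrad f (x + ρ • ((1 - lam + lam / ‖sgrad f x v‖) • sgrad f x v)) v) G : ℝ) ∂𝒟 ≥
      (1 - β / 2) * ‖G‖ ^ 2 - Lmax ^ 2 * ρ ^ 2 * lam ^ 2 / β -
      Lmax ^ 2 * ρ ^ 2 * (1 - lam) ^ 2 / β * ∫ v, ‖sgrad f x v‖ ^ 2 ∂𝒟 := by
  have hinner_int : Integrable (fun v => (inner ℝ (sgrad f x v) G : ℝ)) 𝒟 := by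
    have h := ContinuousLinearMap.integrable_comp (innerSL ℝ G) hgint
    exact h.congr (Filter.Eventually.of_forall fun v => by
      simp only [ContinuousLinearMap.coe_comp', Function.comp_apply, innerSL_apply_apply]
      exact real_inner_comm _ _)
  have hlow_int : Integrable (fun v => (inner ℝ (sgrad f x v) G : ℝ)
      - (β / 2 * ‖G‖ ^ 2 + Lmax ^ 2 * ρ ^ 2 * lam ^ 2 / β)
      - (Lmax ^ 2 * ρ ^ 2 * (1 - lam) ^ 2 / β) * ‖sgrad f x v‖ ^ 2) 𝒟 :=
    (hinner_int.sub (integrable_const _)).sub (hint1.const_mul _)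
  have hptwise : ∀ᵐ v ∂𝒟,
      (inner ℝ (sgrad f x v) G : ℝ)
      - (β / 2 * ‖G‖ ^ 2 + Lmax ^ 2 * ρ ^ 2 * lam ^ 2 / β)
      - (Lmax ^ 2 * ρ ^ 2 * (1 - lam) ^ 2 / β) * ‖sgrad f x v‖ ^ 2 ≤
      (inner ℝ (sgrad f (x + ρ • ((1 - lam + lam / ‖sgrad f x v‖) • sgrad f x v)) v) G : ℝ) := by
    filter_upwards [hglip] with v hlip
    set gv : EuclideanSpace ℝ (Fin d) := sgrad f x v with hgv
    set y : EuclideanSpace ℝ (Fin d) := x + ρ • ((1 - lam + lam / ‖gv‖) • gv) with hy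
    have hdist : ‖sgrad f y v - gv‖ ≤ Lmax * (ρ * (lam + (1 - lam) * ‖gv‖)) := by
      have h1 : ‖sgrad f y v - gv‖ ≤ Lmax * ‖y - x‖ := by
        have := hlip.dist_le_mul y x
        simpa [hgv, dist_eq_norm, Real.coe_toNNReal Lmax hL] using this
      have h2 : ‖y - x‖ ≤ ρ * (lam + (1 - lam) * ‖gv‖) := by
        have hyx : y - x = ρ • ((1 - lam + lam / ‖gv‖) • gv) := by rw [hy]; abel
        rw [hyx, norm_smul, norm_smul]
        by_cases hgz : gv = 0
        · rw [hgz]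
          simp only [norm_zero, mul_zero, add_zero]
          exact mul_nonneg hρ hlam0
        · have hgn : 0 < ‖gv‖ := norm_pos_iff.mpr hgz
          have habs : |1 - lam + lam / ‖gv‖| = 1 - lam + lam / ‖gv‖ :=
            abs_of_nonneg (add_nonneg (by linarith) (div_nonneg hlam0 (norm_nonneg _)))
          rw [Real.norm_eq_abs, Real.norm_eq_abs, abs_of_nonneg hρ, habs]
          have hkey : (1 - lam + lam / ‖gv‖) * ‖gv‖ = (1 - lam) * ‖gv‖ + lam := by
            field_simp
          rw [hkey]
          exact le_of_eq (by ring)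
      calc ‖sgrad f y v - gv‖ ≤ Lmax * ‖y - x‖ := h1
        _ ≤ Lmax * (ρ * (lam + (1 - lam) * ‖gv‖)) := mul_le_mul_of_nonneg_left h2 hL
    have hcs : (inner ℝ (gv - sgrad f y v) G : ℝ) ≤ ‖gv - sgrad f y v‖ * ‖G‖ :=
      real_inner_le_norm _ _
    have hsub : (inner ℝ (gv - sgrad f y v) G : ℝ)
        = (inner ℝ gv G : ℝ) - (inner ℝ (sgrad f y v) G : ℝ) := inner_sub_left _ _ _
    have hprod : ‖gv - sgrad f y v‖ * ‖G‖ ≤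
        Lmax * (ρ * (lam + (1 - lam) * ‖gv‖)) * ‖G‖ := by
      rw [show gv - sgrad f y v = -(sgrad f y v - gv) by abel, norm_neg]
      exact mul_le_mul_of_nonneg_right hdist (norm_nonneg G)
    have y1 : ‖G‖ * (Lmax * ρ * lam) ≤ β / 4 * ‖G‖ ^ 2 + (Lmax * ρ * lam) ^ 2 / β :=
      young_aux hβ
    have y2 : ‖G‖ * (Lmax * ρ * (1 - lam) * ‖gv‖) ≤
        β / 4 * ‖G‖ ^ 2 + (Lmax * ρ * (1 - lam) * ‖gv‖) ^ 2 / β := young_aux hβ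
    have e1 : (Lmax * ρ * lam) ^ 2 / β = Lmax ^ 2 * ρ ^ 2 * lam ^ 2 / β := by ring
    have e2 : (Lmax * ρ * (1 - lam) * ‖gv‖) ^ 2 / β
        = Lmax ^ 2 * ρ ^ 2 * (1 - lam) ^ 2 / β * ‖gv‖ ^ 2 := by ring
    have esplit : Lmax * (ρ * (lam + (1 - lam) * ‖gv‖)) * ‖G‖ =
        ‖G‖ * (Lmax * ρ * lam) + ‖G‖ * (Lmax * ρ * (1 - lam) * ‖gv‖) := by ring
    linarith [hcs, hsub, hprod, y1, y2, e1, e2, esplit]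
  have hint_le := integral_mono_ae hlow_int hint2 hptwise
  have hmean_inner : ∫ v, (inner ℝ (sgrad f x v) G : ℝ) ∂𝒟 = ‖G‖ ^ 2 := by
    have h := integral_inner (𝕜 := ℝ) hgint G
    calc ∫ v, (inner ℝ (sgrad f x v) G : ℝ) ∂𝒟
        = ∫ v, (inner ℝ G (sgrad f x v) : ℝ) ∂𝒟 := by
          simp only [real_inner_comm]
      _ = inner ℝ G (∫ v, sgrad f x v ∂𝒟) := h
      _ = ‖G‖ ^ 2 := by rw [hgmean, real_inner_self_eq_norm_sq]
  have hcalc : ∫ v, ((inner ℝ (sgrad f x v) G : ℝ)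
      - (β / 2 * ‖G‖ ^ 2 + Lmax ^ 2 * ρ ^ 2 * lam ^ 2 / β)
      - (Lmax ^ 2 * ρ ^ 2 * (1 - lam) ^ 2 / β) * ‖sgrad f x v‖ ^ 2) ∂𝒟
      = ‖G‖ ^ 2 - (β / 2 * ‖G‖ ^ 2 + Lmax ^ 2 * ρ ^ 2 * lam ^ 2 / β)
        - (Lmax ^ 2 * ρ ^ 2 * (1 - lam) ^ 2 / β) * ∫ v, ‖sgrad f x v‖ ^ 2 ∂𝒟 := by
    have i1 : Integrable (fun v => (inner ℝ (sgrad f x v) G : ℝ)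
        - (β / 2 * ‖G‖ ^ 2 + Lmax ^ 2 * ρ ^ 2 * lam ^ 2 / β)) 𝒟 :=
      hinner_int.sub (integrable_const _)
    have i2 : Integrable (fun v =>
        (Lmax ^ 2 * ρ ^ 2 * (1 - lam) ^ 2 / β) * ‖sgrad f x v‖ ^ 2) 𝒟 :=
      hint1.const_mul _
    have i3 : Integrable (fun _ : Fin n → ℝ =>
        (β / 2 * ‖G‖ ^ 2 + Lmax ^ 2 * ρ ^ 2 * lam ^ 2 / β)) 𝒟 := integrable_const _
    rw [integral_sub i1 i2, integral_sub hinner_int i3, integral_const_mul _ _, integral_const,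
        hmean_inner]
    simp
  rw [hcalc] at hint_le
  rw [ge_iff_le]
  linarith [hint_le]


/-- **Lemma (inner-product lower bound for the perturbed stochastic gradient).**
Note that in Lean `lam / ‖(0 : E)‖ = lam / 0 = 0`, matching the convention `λ/0 = 0`. -/
theorem perturbed_sgrad_inner_product
    {d n : ℕ} (hn : 0 < n)
    (f : Fin n → EuclideanSpace ℝ (Fin d) → ℝ)
    (L : Fin n → ℝ) (hLnonneg : ∀ i, 0 ≤ L i)
    (hdiff : ∀ i, Differentiable ℝ (f i))
    (hsmooth : ∀ i, LipschitzWith (L i).toNNReal (gradient (f i)))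
    (Lmax : ℝ) (hLmax_ub : ∀ i, L i ≤ Lmax) (hLmax_mem : ∃ i, L i = Lmax)
    (𝒟 : Measure (Fin n → ℝ)) [IsProbabilityMeasure 𝒟]
    (hunbiased : ∀ i, ∫ v, v i ∂𝒟 = 1)
    (hglip : ∀ᵐ v ∂𝒟, LipschitzWith Lmax.toNNReal (fun x => sgrad f x v))
    (x : EuclideanSpace ℝ (Fin d)) (ρ : ℝ) (hρ : 0 ≤ ρ)
    (lam : ℝ) (hlam0 : 0 ≤ lam) (hlam1 : lam ≤ 1)
    (β : ℝ) (hβ : 0 < β)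
    -- the stated expectations exist, and the stochastic gradient is unbiased at `x`
    (hint1 : Integrable (fun v => ‖sgrad f x v‖ ^ 2) 𝒟)
    (hint2 : Integrable (fun v =>
      (inner ℝ (sgrad f (x + ρ • ((1 - lam + lam / ‖sgrad f x v‖) • sgrad f x v)) v)
        (gradient (favg f) x) : ℝ)) 𝒟)
    (hgint : Integrable (fun v => sgrad f x v) 𝒟)
    (hgmean : ∫ v, sgrad f x v ∂𝒟 = gradient (favg f) x) :
    (∫ v, (inner ℝ (sgrad f (x + ρ • ((1 - lam + lam / ‖sgrad f x v‖) • sgrad f x v)) v)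
        (gradient (favg f) x) : ℝ) ∂𝒟 ≥
      (1 - β / 2) * ‖gradient (favg f) x‖ ^ 2 - Lmax ^ 2 * ρ ^ 2 * lam ^ 2 / β -
      Lmax ^ 2 * ρ ^ 2 * (1 - lam) ^ 2 / β * ∫ v, ‖sgrad f x v‖ ^ 2 ∂𝒟) ∧
    (0 < ρ →
      ∫ v, (inner ℝ (sgrad f (x + ρ • ((1 - lam + lam / ‖sgrad f x v‖) • sgrad f x v)) v)
        (gradient (favg f) x) : ℝ) ∂𝒟 ≥
      (1 - Lmax * ρ / 2) * ‖gradient (favg f) x‖ ^ 2 - Lmax * ρ * lam ^ 2 -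
      Lmax * ρ * (1 - lam) ^ 2 * ∫ v, ‖sgrad f x v‖ ^ 2 ∂𝒟) := by
  obtain ⟨i0, hi0⟩ := hLmax_mem
  have hL : 0 ≤ Lmax := hi0 ▸ hLnonneg i0
  constructor
  · exact aux_bound f Lmax hL 𝒟 hglip x ρ hρ lam hlam0 hlam1 β hβ _ hint1 hint2 hgint hgmean
  · intro hρ'
    rcases eq_or_lt_of_le hL with hL0 | hLpos
    · -- degenerate case `Lmax = 0`
      have heq : ∀ᵐ v ∂𝒟,
          (inner ℝ (sgrad f (x + ρ • ((1 - lam + lam / ‖sgrad f x v‖) • sgrad f x v)) v)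
            (gradient (favg f) x) : ℝ) = (inner ℝ (sgrad f x v) (gradient (favg f) x) : ℝ) := by
        filter_upwards [hglip] with v hlip
        have hd := hlip.dist_le_mul
          (x + ρ • ((1 - lam + lam / ‖sgrad f x v‖) • sgrad f x v)) x
        rw [← hL0] at hd
        simp only [Real.toNNReal_zero, NNReal.coe_zero, zero_mul] at hd
        have : sgrad f (x + ρ • ((1 - lam + lam / ‖sgrad f x v‖) • sgrad f x v)) v
            = sgrad f x v := by
          have := dist_le_zero.mp hd
          simpa using this
        rw [this]
      have hI : ∫ v, (inner ℝ (sgrad f (x + ρ • ((1 - lam + lam / ‖sgrad f x v‖) • sgrad f x v)) v)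
          (gradient (favg f) x) : ℝ) ∂𝒟 = ‖gradient (favg f) x‖ ^ 2 := by
        rw [integral_congr_ae heq]
        exact integral_inner_mean hgint hgmean
      rw [ge_iff_le, hI, ← hL0]
      have : (1 - 0 * ρ / 2) * ‖gradient (favg f) x‖ ^ 2 - 0 * ρ * lam ^ 2 -
          0 * ρ * (1 - lam) ^ 2 * ∫ v, ‖sgrad f x v‖ ^ 2 ∂𝒟
          = ‖gradient (favg f) x‖ ^ 2 := by ring
      rw [this]
    · have hb := aux_bound f Lmax hL 𝒟 hglip x ρ hρ lam hlam0 hlam1 (Lmax * ρ)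
        (mul_pos hLpos hρ') _ hint1 hint2 hgint hgmean
      have e1 : Lmax ^ 2 * ρ ^ 2 * lam ^ 2 / (Lmax * ρ) = Lmax * ρ * lam ^ 2 := by
        field_simp
      have e2 : Lmax ^ 2 * ρ ^ 2 * (1 - lam) ^ 2 / (Lmax * ρ) = Lmax * ρ * (1 - lam) ^ 2 := by
        field_simp
      rw [e1, e2] at hb
      exact hb


end
end

section
/- (Descent recursion lemma.) Let (r_t)_{t≥0} and (δ_t)_{t≥0} be sequences of non-negative real numbers, let g > 1 and N ≥ 0, and let T ≥ 1 be an integer. If r_t ≤ g·δ_t − δ_{t+1} + N for all t = 0, 1, …, T−1, then min_{0≤t≤T−1} r_t ≤ (g^T/T)·δ_0 + N. -/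
/-- **Lemma (descent recursion).**  If non-negative sequences satisfy
`r t ≤ g • δ t − δ (t+1) + N` for `t = 0, …, T−1` with `g > 1` and `N ≥ 0`, then
`min_{0 ≤ t ≤ T−1} r t ≤ (g^T / T) δ 0 + N`. -/
theorem descent_recursion_lemma
    (r δ : ℕ → ℝ) (hr : ∀ t, 0 ≤ r t) (hδ : ∀ t, 0 ≤ δ t)
    (g N : ℝ) (hg : 1 < g) (hN : 0 ≤ N)
    (T : ℕ) (hT : 1 ≤ T)
    (hrec : ∀ t < T, r t ≤ g * δ t - δ (t + 1) + N) :
    (Finset.range T).inf' (Finset.nonempty_range_iff.mpr (by omega)) r ≤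
      g ^ T / T * δ 0 + N := by
  have hg0 : (0:ℝ) < g := lt_trans one_pos hg
  have hg1 : (1:ℝ) ≤ g := le_of_lt hg
  have hT0 : (0:ℝ) < (T:ℝ) := by exact_mod_cast hT
  set m := (Finset.range T).inf' (Finset.nonempty_range_iff.mpr (by omega : T ≠ 0)) r with hm
  have hpos : 0 ≤ g ^ T / T * δ 0 :=
    mul_nonneg (div_nonneg (pow_nonneg hg0.le T) hT0.le) (hδ 0)
  by_cases hmN : m ≤ N
  · linarith
  push_neg at hmN
  set w : ℕ → ℝ := fun t => g ^ (T - 1 - t) with hw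
  set f : ℕ → ℝ := fun t => g ^ (T - t) * δ t with hf
  have hW : (T:ℝ) ≤ ∑ t ∈ Finset.range T, w t := by
    calc (T:ℝ) = ∑ _t ∈ Finset.range T, (1:ℝ) := by simp
    _ ≤ ∑ t ∈ Finset.range T, w t :=
      Finset.sum_le_sum fun t _ => one_le_pow₀ hg1
  have hS1 : ∑ t ∈ Finset.range T, w t * r t ≤
      g ^ T * δ 0 + N * ∑ t ∈ Finset.range T, w t := by
    have step : ∀ t ∈ Finset.range T, w t * r t ≤ (f t - f (t + 1)) + N * w t := by
      intro t ht
      rw [Finset.mem_range] at ht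
      have hw0 : 0 ≤ w t := pow_nonneg hg0.le _
      have hTt : T - t = (T - 1 - t) + 1 := by omega
      have hf' : f t = g * w t * δ t := by
        simp only [hf, hw, hTt, pow_succ]; ring
      have hf'' : f (t + 1) = w t * δ (t + 1) := by
        simp only [hf, hw]
        congr 2
        omega
      have := mul_le_mul_of_nonneg_left (hrec t ht) hw0
      rw [hf', hf'']
      nlinarith
    calc ∑ t ∈ Finset.range T, w t * r t
        ≤ ∑ t ∈ Finset.range T, ((f t - f (t + 1)) + N * w t) :=
          Finset.sum_le_sum step
      _ = (f 0 - f T) + N * ∑ t ∈ Finset.range T, w t := by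
          rw [Finset.sum_add_distrib, Finset.sum_range_sub' f, Finset.mul_sum]
      _ ≤ g ^ T * δ 0 + N * ∑ t ∈ Finset.range T, w t := by
          have : f 0 = g ^ T * δ 0 := by simp [hf]
          have h2 : 0 ≤ f T := mul_nonneg (pow_nonneg hg0.le _) (hδ T)
          linarith
  have hS2 : m * ∑ t ∈ Finset.range T, w t ≤ ∑ t ∈ Finset.range T, w t * r t := by
    rw [Finset.mul_sum]
    refine Finset.sum_le_sum fun t ht => ?_
    have := Finset.inf'_le r ht
    have hw0 : 0 ≤ w t := pow_nonneg hg0.le _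
    calc m * w t = w t * m := mul_comm _ _
      _ ≤ w t * r t := mul_le_mul_of_nonneg_left this hw0
  -- combine
  set W := ∑ t ∈ Finset.range T, w t with hWdef
  have hkey : (m - N) * W ≤ g ^ T * δ 0 := by nlinarith
  have hkey2 : (m - N) * (T:ℝ) ≤ (m - N) * W :=
    mul_le_mul_of_nonneg_left (le_trans hW (le_refl W)) (by linarith)
  have : (m - N) * (T:ℝ) ≤ g ^ T * δ 0 := le_trans hkey2 hkey
  have hfin : m - N ≤ g ^ T * δ 0 / T := (le_div_iff₀ hT0).mpr this
  rw [div_mul_eq_mul_div]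
  linarith
end

section
/- (ER holds under arbitrary sampling with finite second moments.) Assume each f_i is L_i-smooth and bounded below with f_i* = inf_x f_i(x), that f attains its minimum at some point x*, and that E_𝒟[v_i²] < ∞ for all i. Set σ* = (1/n)∑_{i=1}^n (f_i(x*) − f_i*) ≥ 0 and A = max_i L_i·E_𝒟[v_i²]. Then for all x ∈ ℝ^d, E_v‖g(x,v)‖² ≤ 2A·(f(x) − f^inf) + 2A·σ*; i.e., the ER condition holds with constants A = max_i L_i E[v_i²], B = 0, and C = 2Aσ*. -/
open MeasureTheory

noncomputable section

section Aux

variable {d : ℕ}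

/-- Descent lemma: for `L`-smooth `f`,
`f (x+u) ≤ f x + ⟪∇f x, u⟫ + L/2 ‖u‖²`. -/
lemma descent_lemma {f : EuclideanSpace ℝ (Fin d) → ℝ} {L : ℝ} (hL : 0 ≤ L)
    (hdiff : Differentiable ℝ f)
    (hlip : LipschitzWith L.toNNReal (gradient f))
    (x u : EuclideanSpace ℝ (Fin d)) :
    f (x + u) ≤ f x + (inner ℝ (gradient f x) u : ℝ) + L / 2 * ‖u‖ ^ 2 := by
  set g : ℝ → ℝ := fun t => f (x + t • u) with hg
  have hgd : ∀ t : ℝ, HasDerivAt g (inner ℝ (gradient f (x + t • u)) u : ℝ) t := by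
    intro t
    have hc : HasDerivAt (fun t : ℝ => x + t • u) u t := by
      simpa using ((hasDerivAt_id t).smul_const u).const_add x
    have hf' : HasFDerivAt f (InnerProductSpace.toDual ℝ _ (gradient f (x + t • u)))
        (x + t • u) := (hdiff _).hasGradientAt.hasFDerivAt
    have hcomp := hf'.comp_hasDerivAt t hc
    simp only [InnerProductSpace.toDual_apply_apply] at hcomp
    exact hcomp
  set h : ℝ → ℝ := fun t =>
    f x + t * (inner ℝ (gradient f x) u : ℝ) + L / 2 * t ^ 2 * ‖u‖ ^ 2 - g t with hh
  have hhd : ∀ t : ℝ, HasDerivAt h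
      ((inner ℝ (gradient f x) u : ℝ) + L / 2 * (2 * t) * ‖u‖ ^ 2
        - (inner ℝ (gradient f (x + t • u)) u : ℝ)) t := by
    intro t
    have h1 : HasDerivAt (fun t : ℝ => f x + t * (inner ℝ (gradient f x) u : ℝ)
        + L / 2 * t ^ 2 * ‖u‖ ^ 2)
        ((inner ℝ (gradient f x) u : ℝ) + L / 2 * (2 * t) * ‖u‖ ^ 2) t := by
      have h2 : HasDerivAt (fun t : ℝ => t * (inner ℝ (gradient f x) u : ℝ))
          (inner ℝ (gradient f x) u : ℝ) t := by simpa using (hasDerivAt_id t).mul_const _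
      have h3 : HasDerivAt (fun t : ℝ => L / 2 * t ^ 2 * ‖u‖ ^ 2)
          (L / 2 * (2 * t) * ‖u‖ ^ 2) t := by
        have := (hasDerivAt_pow 2 t).const_mul (L / 2)
        simpa [mul_comm, mul_assoc, mul_left_comm] using this.mul_const (‖u‖ ^ 2)
      exact (h2.const_add _).add h3
    exact h1.sub (hgd t)
  have hmono : MonotoneOn h (Set.Icc (0:ℝ) 1) := by
    apply monotoneOn_of_deriv_nonneg (convex_Icc 0 1)
    · exact fun t _ => ((hhd t).differentiableAt).continuousAt.continuousWithinAt
    · exact fun t _ => ((hhd t).differentiableAt).differentiableWithinAt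
    · intro t ht
      rw [interior_Icc] at ht
      rw [(hhd t).deriv]
      have hineq : (inner ℝ (gradient f (x + t • u) - gradient f x) u : ℝ)
          ≤ L * t * ‖u‖ ^ 2 := by
        calc (inner ℝ (gradient f (x + t • u) - gradient f x) u : ℝ)
            ≤ ‖gradient f (x + t • u) - gradient f x‖ * ‖u‖ := real_inner_le_norm _ _
          _ ≤ (L * (t * ‖u‖)) * ‖u‖ := by
              apply mul_le_mul_of_nonneg_right _ (norm_nonneg u)
              have := hlip.dist_le_mul (x + t • u) x
              rw [dist_eq_norm, dist_eq_norm] at this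
              simpa [Real.coe_toNNReal L hL, norm_smul, abs_of_pos ht.1] using this
          _ = L * t * ‖u‖ ^ 2 := by ring
      rw [inner_sub_left] at hineq
      nlinarith [hineq]
  have h01 : h 0 ≤ h 1 := hmono (by norm_num) (by norm_num) (by norm_num)
  have h0 : h 0 = 0 := by simp [hh, hg]
  have h1 : h 1 = f x + (inner ℝ (gradient f x) u : ℝ) + L / 2 * ‖u‖ ^ 2 - f (x + u) := by
    simp [hh, hg]
  rw [h0, h1] at h01
  linarith

/-- For an `L`-smooth function bounded below, `‖∇f x‖² ≤ 2L (f x − inf f)`. -/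
lemma norm_grad_sq_le {f : EuclideanSpace ℝ (Fin d) → ℝ} {L : ℝ} (hL : 0 ≤ L)
    (hdiff : Differentiable ℝ f)
    (hlip : LipschitzWith L.toNNReal (gradient f))
    (hb : BddBelow (Set.range f))
    (x : EuclideanSpace ℝ (Fin d)) :
    ‖gradient f x‖ ^ 2 ≤ 2 * L * (f x - ⨅ y, f y) := by
  set m : ℝ := ⨅ y, f y with hm
  have hmle : ∀ y, m ≤ f y := fun y => ciInf_le hb y
  set G : EuclideanSpace ℝ (Fin d) := gradient f x with hG
  have key : ∀ t : ℝ, 0 ≤ t →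
      m ≤ f x - t * ‖G‖ ^ 2 + L / 2 * t ^ 2 * ‖G‖ ^ 2 := by
    intro t ht
    have hdl := descent_lemma hL hdiff hlip x ((-t) • G)
    have hin : (inner ℝ G ((-t) • G) : ℝ) = -t * ‖G‖ ^ 2 := by
      rw [real_inner_smul_right, real_inner_self_eq_norm_sq]
    have hnorm : ‖(-t) • G‖ ^ 2 = t ^ 2 * ‖G‖ ^ 2 := by
      rw [norm_smul, norm_neg, Real.norm_eq_abs, abs_of_nonneg ht]; ring
    rw [hin, hnorm] at hdl
    calc m ≤ f (x + (-t) • G) := hmle _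
      _ ≤ _ := by linarith [hdl]
  rcases hL.eq_or_lt with hL0 | hLpos
  · -- L = 0
    have key0 : ∀ t : ℝ, 0 ≤ t → m ≤ f x - t * ‖G‖ ^ 2 := by
      intro t ht
      have := key t ht
      rw [← hL0] at this
      simpa using this
    have hGz : ‖G‖ ^ 2 ≤ 0 := by
      by_contra hpos
      push_neg at hpos
      have hS : 0 < ‖G‖ ^ 2 := hpos
      have hfm : 0 ≤ f x - m := by linarith [hmle x]
      have ht0 : (0:ℝ) ≤ (f x - m + 1) / ‖G‖ ^ 2 := by positivity
      have hk := key0 _ ht0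
      rw [div_mul_cancel₀ _ (ne_of_gt hS)] at hk
      linarith
    have hGz' : ‖G‖ ^ 2 = 0 := le_antisymm hGz (sq_nonneg _)
    rw [hGz', ← hL0]
    simp
  · have hLne : L ≠ 0 := ne_of_gt hLpos
    have hk := key L⁻¹ (by positivity)
    have h2 : L / 2 * L⁻¹ ^ 2 * ‖G‖ ^ 2 = L⁻¹ / 2 * ‖G‖ ^ 2 := by
      field_simp
    rw [h2] at hk
    have h3 : L⁻¹ / 2 * ‖G‖ ^ 2 ≤ f x - m := by linarith [hk]
    calc ‖G‖ ^ 2 = 2 * L * (L⁻¹ / 2 * ‖G‖ ^ 2) := by field_simp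
      _ ≤ 2 * L * (f x - m) := mul_le_mul_of_nonneg_left h3 (by positivity)

end Aux

/-- **Proposition (the Expected Residual condition holds under arbitrary sampling with
finite second moments), with `A = max_i L i · E[v i ^ 2]`, `B = 0`, `C = 2·A·σ*`.** -/
theorem ER_of_arbitrary_sampling
    {d n : ℕ} (hn : 0 < n)
    (f : Fin n → EuclideanSpace ℝ (Fin d) → ℝ)
    (L : Fin n → ℝ) (hLnonneg : ∀ i, 0 ≤ L i)
    (hdiff : ∀ i, Differentiable ℝ (f i))
    (hsmooth : ∀ i, LipschitzWith (L i).toNNReal (gradient (f i)))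
    (hbelow : ∀ i, BddBelow (Set.range (f i)))
    (xstar : EuclideanSpace ℝ (Fin d)) (hmin : ∀ y, favg f xstar ≤ favg f y)
    (𝒟 : Measure (Fin n → ℝ)) [IsProbabilityMeasure 𝒟]
    (hunbiased : ∀ i, ∫ v, v i ∂𝒟 = 1)
    -- finite second moments `E[v i ^ 2] < ∞`
    (hv2 : ∀ i, Integrable (fun v => (v i) ^ 2) 𝒟)
    -- `σ* = (1/n) ∑ i, (f i x* − inf f i)` and `A = max_i L i · E[v i ^ 2]`
    (σstar A : ℝ)
    (hσstar : σstar = (n : ℝ)⁻¹ * ∑ i, (f i xstar - ⨅ y, f i y))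
    (hAdef : A = Finset.univ.sup'
      (Finset.univ_nonempty_iff.mpr (Fin.pos_iff_nonempty.mp hn))
      (fun i => L i * ∫ v, (v i) ^ 2 ∂𝒟)) :
    ∀ x, ∫ v, ‖sgrad f x v‖ ^ 2 ∂𝒟 ≤
      2 * A * (favg f x - ⨅ y, favg f y) + 2 * A * σstar := by
  intro x
  set G : Fin n → EuclideanSpace ℝ (Fin d) := fun i => gradient (f i) x with hGdef
  -- inf of favg is attained at xstar
  have hFb : BddBelow (Set.range (favg f)) :=
    ⟨favg f xstar, by rintro _ ⟨y, rfl⟩; exact hmin y⟩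
  have hinfF : (⨅ y, favg f y) = favg f xstar :=
    le_antisymm (ciInf_le hFb xstar) (le_ciInf hmin)
  have hcard : (((Finset.univ : Finset (Fin n)).card : ℕ) : ℝ) = (n : ℝ) := by simp
  -- pointwise bound
  have hpt : ∀ v : Fin n → ℝ, ‖sgrad f x v‖ ^ 2 ≤
      (n : ℝ)⁻¹ * ∑ i, (v i) ^ 2 * ‖G i‖ ^ 2 := by
    intro v
    have hns : ‖sgrad f x v‖ = (n : ℝ)⁻¹ * ‖∑ i, v i • G i‖ := by
      rw [sgrad, norm_smul, Real.norm_eq_abs, abs_of_nonneg (by positivity)]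
    have hsum : ‖∑ i, v i • G i‖ ^ 2 ≤ (n : ℝ) * ∑ i, (v i) ^ 2 * ‖G i‖ ^ 2 := by
      calc ‖∑ i, v i • G i‖ ^ 2 ≤ (∑ i, ‖v i • G i‖) ^ 2 := by
            apply pow_le_pow_left₀ (norm_nonneg _) (norm_sum_le _ _)
        _ ≤ (n : ℝ) * ∑ i, ‖v i • G i‖ ^ 2 := by
            rw [← hcard]; exact sq_sum_le_card_mul_sum_sq
        _ = (n : ℝ) * ∑ i, (v i) ^ 2 * ‖G i‖ ^ 2 := by
            congr 1
            apply Finset.sum_congr rfl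
            intro i _
            rw [norm_smul, Real.norm_eq_abs, mul_pow, sq_abs]
    have hn0 : (0:ℝ) < (n:ℝ) := by exact_mod_cast hn
    rw [hns, mul_pow]
    calc ((n:ℝ)⁻¹) ^ 2 * ‖∑ i, v i • G i‖ ^ 2
        ≤ ((n:ℝ)⁻¹) ^ 2 * ((n : ℝ) * ∑ i, (v i) ^ 2 * ‖G i‖ ^ 2) := by
          apply mul_le_mul_of_nonneg_left hsum (by positivity)
      _ = (n : ℝ)⁻¹ * ∑ i, (v i) ^ 2 * ‖G i‖ ^ 2 := by
          field_simp
  -- integrability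
  have hRHSint : Integrable (fun v => (n : ℝ)⁻¹ * ∑ i, (v i) ^ 2 * ‖G i‖ ^ 2) 𝒟 := by
    apply Integrable.const_mul
    apply integrable_finset_sum
    intro i _
    exact (hv2 i).mul_const _
  have hLHSmeas : AEStronglyMeasurable (fun v : Fin n → ℝ => ‖sgrad f x v‖ ^ 2) 𝒟 := by
    apply Continuous.aestronglyMeasurable
    have : Continuous fun v : Fin n → ℝ => sgrad f x v := by
      unfold sgrad
      fun_prop
    exact (this.norm.pow 2)
  have hLHSint : Integrable (fun v => ‖sgrad f x v‖ ^ 2) 𝒟 := by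
    apply hRHSint.mono hLHSmeas
    filter_upwards with v
    rw [Real.norm_eq_abs, Real.norm_eq_abs, abs_of_nonneg (by positivity)]
    have h2 : (0:ℝ) ≤ (n : ℝ)⁻¹ * ∑ i, (v i) ^ 2 * ‖G i‖ ^ 2 := by positivity
    rw [abs_of_nonneg h2]
    exact hpt v
  have hstep1 : ∫ v, ‖sgrad f x v‖ ^ 2 ∂𝒟 ≤
      ∫ v, (n : ℝ)⁻¹ * ∑ i, (v i) ^ 2 * ‖G i‖ ^ 2 ∂𝒟 :=
    integral_mono hLHSint hRHSint hpt
  have hstep2 : ∫ v, (n : ℝ)⁻¹ * ∑ i, (v i) ^ 2 * ‖G i‖ ^ 2 ∂𝒟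
      = (n : ℝ)⁻¹ * ∑ i, (∫ v, (v i) ^ 2 ∂𝒟) * ‖G i‖ ^ 2 := by
    rw [integral_const_mul]
    congr 1
    rw [integral_finset_sum _ (fun i _ => (hv2 i).mul_const _)]
    exact Finset.sum_congr rfl fun i _ => integral_mul_const _ _
  -- bound each term
  have hterm : ∀ i, (∫ v, (v i) ^ 2 ∂𝒟) * ‖G i‖ ^ 2 ≤
      2 * A * (f i x - ⨅ y, f i y) := by
    intro i
    have hInn : 0 ≤ ∫ v, (v i) ^ 2 ∂𝒟 := integral_nonneg fun v => sq_nonneg _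
    have hgrad := norm_grad_sq_le (hLnonneg i) (hdiff i) (hsmooth i) (hbelow i) x
    have hAi : L i * ∫ v, (v i) ^ 2 ∂𝒟 ≤ A := by
      rw [hAdef]
      exact Finset.le_sup' (fun i => L i * ∫ v, (v i) ^ 2 ∂𝒟) (Finset.mem_univ i)
    have hfpos : 0 ≤ f i x - ⨅ y, f i y := by
      have := ciInf_le (hbelow i) x
      linarith
    calc (∫ v, (v i) ^ 2 ∂𝒟) * ‖G i‖ ^ 2
        ≤ (∫ v, (v i) ^ 2 ∂𝒟) * (2 * L i * (f i x - ⨅ y, f i y)) :=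
          mul_le_mul_of_nonneg_left hgrad hInn
      _ = 2 * (L i * ∫ v, (v i) ^ 2 ∂𝒟) * (f i x - ⨅ y, f i y) := by ring
      _ ≤ 2 * A * (f i x - ⨅ y, f i y) := by
          apply mul_le_mul_of_nonneg_right _ hfpos
          linarith
  have hstep3 : (n : ℝ)⁻¹ * ∑ i, (∫ v, (v i) ^ 2 ∂𝒟) * ‖G i‖ ^ 2 ≤
      (n : ℝ)⁻¹ * ∑ i, 2 * A * (f i x - ⨅ y, f i y) := by
    apply mul_le_mul_of_nonneg_left _ (by positivity)
    exact Finset.sum_le_sum fun i _ => hterm i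
  -- the final algebraic identity
  have hfinal : (n : ℝ)⁻¹ * ∑ i, 2 * A * (f i x - ⨅ y, f i y) =
      2 * A * (favg f x - ⨅ y, favg f y) + 2 * A * σstar := by
    rw [hinfF, hσstar]
    simp only [favg, ← Finset.mul_sum, Finset.sum_sub_distrib]
    ring
  calc ∫ v, ‖sgrad f x v‖ ^ 2 ∂𝒟
      ≤ ∫ v, (n : ℝ)⁻¹ * ∑ i, (v i) ^ 2 * ‖G i‖ ^ 2 ∂𝒟 := hstep1
    _ = (n : ℝ)⁻¹ * ∑ i, (∫ v, (v i) ^ 2 ∂𝒟) * ‖G i‖ ^ 2 := hstep2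
    _ ≤ (n : ℝ)⁻¹ * ∑ i, 2 * A * (f i x - ⨅ y, f i y) := hstep3
    _ = _ := hfinal

end
end
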